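/- Let F = (f_1, …, f_m) be a sequence of polynomials in R and v_F : R^m → R the evaluation map. Let g ∈ R^m satisfy g_j = 0 for all j < k and g_k ≠ 0, and set t = lm(g_k). If there exists a nonzero polynomial q in the ideal generated by f_{k+1}, …, f_m such that lm(q) divides t, then there exists g' ∈ R^m with v_F(g') = v_F(g), g'_j = 0 for all j < k, and either g'_k = 0 or lm(g'_k) < t. (This is the mathematical content of the F5 Criterion: a signature whose term is divisible by the head term of an element of the ideal generated by the later input polynomials is not minimal.) -/

import Mathlib

open MvPolynomial

/-- The leading monomial (exponent vector) of a polynomial with respect to a monomial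
order `m`: the `m`-maximum of its support (`0` for the zero polynomial). -/
noncomputable def lm {σ K : Type*} [Field K] (m : MonomialOrder σ)
    (p : MvPolynomial σ K) : σ →₀ ℕ :=
  m.toSyn.symm (p.support.sup m.toSyn)

/-- The leading coefficient of a polynomial with respect to a monomial order `m`. -/
noncomputable def lc {σ K : Type*} [Field K] (m : MonomialOrder σ)
    (p : MvPolynomial σ K) : K :=
  p.coeff (lm m p)

/-- `γ(p,q)`: the least common multiple (componentwise maximum) of the leading
monomials of `p` and `q`. -/
noncomputable def gam {σ K : Type*} [Field K] (m : MonomialOrder σ)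
    (p q : MvPolynomial σ K) : σ →₀ ℕ :=
  lm m p ⊔ lm m q

/-- The S-polynomial of `p` and `q`:
`Spol(p,q) = lc(q)·X^(γ(p,q)-lm(p))·p − lc(p)·X^(γ(p,q)-lm(q))·q`. -/
noncomputable def Spol {σ K : Type*} [Field K] (m : MonomialOrder σ)
    (p q : MvPolynomial σ K) : MvPolynomial σ K :=
  monomial (gam m p q - lm m p) (lc m q) * p - monomial (gam m p q - lm m q) (lc m p) * q

/-- **F5 Criterion** (mathematical content): if `g ∈ R^M` has `g_j = 0` for `j < k`,
`g_k ≠ 0` with `t = lm(g_k)`, and some nonzero `q` in the ideal generated by the later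
input polynomials `f_{k+1}, …, f_M` has `lm(q) ∣ t`, then `v_F(g)` is also represented by
some `g'` with the same vanishing pattern below `k` and a strictly smaller signature term:
`g'_k = 0` or `lm(g'_k) ≺ t`. -/
lemma lm_mem_support {σ K : Type*} [Field K] (m : MonomialOrder σ)
    {p : MvPolynomial σ K} (hp : p ≠ 0) : lm m p ∈ p.support := by
  obtain ⟨i, hi, he⟩ := Finset.exists_mem_eq_sup p.support
    (by simpa using hp) m.toSyn
  rw [lm, he, AddEquiv.symm_apply_apply]; exact hi

lemma le_lm {σ K : Type*} [Field K] (m : MonomialOrder σ)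
    {p : MvPolynomial σ K} {d : σ →₀ ℕ} (hd : d ∈ p.support) :
    m.toSyn d ≤ m.toSyn (lm m p) := by
  rw [lm, AddEquiv.apply_symm_apply]
  exact Finset.le_sup hd

lemma lc_ne_zero {σ K : Type*} [Field K] (m : MonomialOrder σ)
    {p : MvPolynomial σ K} (hp : p ≠ 0) : lc m p ≠ 0 := by
  simpa [lc, mem_support_iff] using lm_mem_support m hp

theorem f5_criterion
    {σ K : Type*} [Field K] (m : MonomialOrder σ)
    {M : ℕ} (F : Fin M → MvPolynomial σ K)
    (g : Fin M → MvPolynomial σ K) (k : Fin M)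
    (hg0 : ∀ j, j < k → g j = 0) (hgk : g k ≠ 0)
    (t : σ →₀ ℕ) (ht : t = lm m (g k))
    (q : MvPolynomial σ K) (hq0 : q ≠ 0)
    (hqI : q ∈ Ideal.span (F '' {i : Fin M | k < i}))
    (hqt : lm m q ≤ t) :
    ∃ g' : Fin M → MvPolynomial σ K,
      (∑ i, g' i * F i) = (∑ i, g i * F i) ∧
      (∀ j, j < k → g' j = 0) ∧
      (g' k = 0 ∨ m.toSyn (lm m (g' k)) < m.toSyn t) := by
  classical
  -- extract a linear combination for q supported on {i | k < i}
  rw [Ideal.span] at hqI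
  obtain ⟨l, hlsupp, hlq⟩ := (Finsupp.mem_span_image_iff_linearCombination _).1 hqI
  have hl0 : ∀ i : Fin M, ¬ k < i → l i = 0 := by
    intro i hi
    by_contra h
    exact hi (hlsupp (Finsupp.mem_support_iff.2 h))
  have hq_sum : (∑ i, l i * F i) = q := by
    rw [← hlq, Finsupp.linearCombination_apply, Finsupp.sum_fintype]
    · simp [smul_eq_mul]
    · intro i; simp
  -- the multiplier
  set a : σ →₀ ℕ := t - lm m q with ha
  have hat : a + lm m q = t := by
    rw [ha]; exact tsub_add_cancel_of_le hqt
  set c : K := lc m (g k) / lc m q with hc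
  have hcne : c ≠ 0 := div_ne_zero (lc_ne_zero m hgk) (lc_ne_zero m hq0)
  set u : MvPolynomial σ K := monomial a c with hu
  -- key facts about u * q
  have huq_le : ∀ e ∈ (u * q).support, m.toSyn e ≤ m.toSyn t := by
    intro e he
    have := MvPolynomial.support_mul u q he
    rw [Finset.mem_add] at this
    obtain ⟨x, hx, y, hy, rfl⟩ := this
    have hx' : x = a := by
      have := MvPolynomial.support_monomial_subset hx
      simpa using this
    subst hx'
    calc m.toSyn (a + y) = m.toSyn a + m.toSyn y := by rw [map_add]
      _ ≤ m.toSyn a + m.toSyn (lm m q) := by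
          exact add_le_add le_rfl (le_lm m hy)
      _ = m.toSyn t := by rw [← map_add, hat]
  have huq_t : (u * q).coeff t = lc m (g k) := by
    rw [← hat, hu, MvPolynomial.coeff_monomial_mul, hc]
    exact div_mul_cancel₀ _ (lc_ne_zero m hq0)
  -- define g'
  set g' : Fin M → MvPolynomial σ K :=
    fun i => g i + u * l i * F k - (if i = k then u * q else 0) with hg'
  have hg'k : g' k = g k - u * q := by
    simp [hg', hl0 k (lt_irrefl k)]
  refine ⟨g', ?_, ?_, ?_⟩
  · -- sums agree
    have : ∀ i, g' i * F i = g i * F i + u * F k * (l i * F i)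
        - (if i = k then u * q * F i else 0) := by
      intro i
      rw [hg']
      by_cases hik : i = k <;> simp [hik] <;> ring
    rw [Finset.sum_congr rfl (fun i _ => this i)]
    rw [Finset.sum_sub_distrib, Finset.sum_add_distrib, ← Finset.mul_sum, hq_sum]
    rw [Finset.sum_ite_eq' Finset.univ k (fun i => u * q * F i)]
    simp only [Finset.mem_univ, if_true]
    ring
  · -- vanishing below k
    intro j hj
    simp [hg', hg0 j hj, hl0 j (not_lt.2 hj.le), if_neg (ne_of_lt hj)]
  · -- signature drop
    rw [hg'k]
    by_cases h0 : g k - u * q = 0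
    · exact Or.inl h0
    · right
      have hcoefft : (g k - u * q).coeff t = 0 := by
        rw [MvPolynomial.coeff_sub, huq_t, ht, lc, sub_self]
      have hmem := lm_mem_support m h0
      rw [mem_support_iff] at hmem
      have hle : m.toSyn (lm m (g k - u * q)) ≤ m.toSyn t := by
        set e := lm m (g k - u * q)
        have : (g k).coeff e ≠ 0 ∨ (u * q).coeff e ≠ 0 := by
          by_contra h
          push_neg at h
          rw [MvPolynomial.coeff_sub, h.1, h.2, sub_zero] at hmem
          exact hmem rfl
        rcases this with h | h
        · have := le_lm m (p := g k) (mem_support_iff.2 h)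
          rwa [← ht] at this
        · exact huq_le e (mem_support_iff.2 h)
      rcases lt_or_eq_of_le hle with h | h
      · exact h
      · exfalso
        have : lm m (g k - u * q) = t := m.toSyn.injective h
        rw [this] at hmem
        exact hmem hcoefft
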